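/- Let (X,d) be a metric space, (x_k) a sequence in X, and suppose δ_{A^I} satisfies property AP A^I O. If (x_k) is A^I-statistically convergent to μ ∈ X, then Λ_x = Γ_x = {μ}, where Λ_x is the set of A^I-statistical limit points and Γ_x is the set of A^I-statistical cluster points of (x_k) (paper's Theorem 4.2). -/

import Mathlib

open Filter Topology

/-- `A` is a nonnegative regular summability matrix. -/
structure RegularMatrix (A : ℕ → ℕ → ℝ) : Prop where
  nonneg : ∀ n k, 0 ≤ A n k
  summable : ∀ n, Summable (A n)
  bounded : ∃ C : ℝ, ∀ n, (∑' k, |A n k|) ≤ C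
  col_lim : ∀ k, Tendsto (fun n => A n k) atTop (𝓝 0)
  row_sum : Tendsto (fun n => ∑' k, A n k) atTop (𝓝 1)

/-- `I` is a non-trivial admissible ideal on ℕ. -/
structure AdmissibleIdeal (I : Set (Set ℕ)) : Prop where
  union_mem : ∀ {a b : Set ℕ}, a ∈ I → b ∈ I → a ∪ b ∈ I
  subset_mem : ∀ {a b : Set ℕ}, a ∈ I → b ⊆ a → b ∈ I
  finite_mem : ∀ {s : Set ℕ}, s.Finite → s ∈ I
  univ_not_mem : Set.univ ∉ I

/-- `I`-limit of a real sequence. -/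
def ILim (I : Set (Set ℕ)) (t : ℕ → ℝ) (L : ℝ) : Prop :=
  ∀ ε > 0, {n : ℕ | ε ≤ |t n - L|} ∈ I

/-- The set `M ⊆ ℕ` has `A^I`-density `δ`, i.e. `I-lim_n Σ_{k∈M} a_{nk} = δ`. -/
def AIDensity (I : Set (Set ℕ)) (A : ℕ → ℕ → ℝ) (M : Set ℕ) (δ : ℝ) : Prop :=
  ILim I (fun n => ∑' k, M.indicator (A n) k) δ

/-- `x` is `A^I`-statistically convergent to `L`. -/
def AIStatConv {X : Type*} [MetricSpace X] (I : Set (Set ℕ)) (A : ℕ → ℕ → ℝ)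
    (x : ℕ → X) (L : X) : Prop :=
  ∀ ε > 0, AIDensity I A {k : ℕ | ε ≤ dist (x k) L} 0

/-- `x` is `A^I`-statistically Cauchy. -/
def AIStatCauchy {X : Type*} [MetricSpace X] (I : Set (Set ℕ)) (A : ℕ → ℕ → ℝ)
    (x : ℕ → X) : Prop :=
  ∀ γ > 0, ∃ k₀ : ℕ, AIDensity I A {k : ℕ | γ ≤ dist (x k) (x k₀)} 0

/-- The additive property for `A^I`-density zero sets (AP`A^I`O). -/
def APAIO (I : Set (Set ℕ)) (A : ℕ → ℕ → ℝ) : Prop :=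
  ∀ G : ℕ → Set ℕ, Pairwise (Function.onFun Disjoint G) →
    (∀ j, AIDensity I A (G j) 0) →
    ∃ H : ℕ → Set ℕ, (∀ j, (symmDiff (G j) (H j)).Finite) ∧
      AIDensity I A (⋃ j, H j) 0

/-- The set of `A^I`-statistical limit points of `x`: points to which some
subsequence of `x`, indexed by an (automatically infinite) set of indices whose
`A^I`-density is not equal to `0` (nonzero or nonexistent), converges. -/
def AIStatLimitPts {X : Type*} [MetricSpace X] (I : Set (Set ℕ)) (A : ℕ → ℕ → ℝ)
    (x : ℕ → X) : Set X :=
  {ζ : X | ∃ f : ℕ → ℕ, StrictMono f ∧ ¬ AIDensity I A (Set.range f) 0 ∧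
    Tendsto (fun j => x (f j)) atTop (𝓝 ζ)}

/-- The set of `A^I`-statistical cluster points of `x`. -/
def AIStatClusterPts {X : Type*} [MetricSpace X] (I : Set (Set ℕ)) (A : ℕ → ℕ → ℝ)
    (x : ℕ → X) : Set X :=
  {ν : X | ∀ ε > 0, ¬ AIDensity I A {k : ℕ | dist (x k) ν < ε} 0}

/-- The set of ordinary limit points of `x` (limits of subsequences). -/
def LimitPts {X : Type*} [MetricSpace X] (x : ℕ → X) : Set X :=
  {ζ : X | ∃ f : ℕ → ℕ, StrictMono f ∧ Tendsto (fun j => x (f j)) atTop (𝓝 ζ)}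


section Helpers
variable {I : Set (Set ℕ)} {A : ℕ → ℕ → ℝ}

lemma ilim_of_tendsto (hI : AdmissibleIdeal I) {t : ℕ → ℝ} {L : ℝ}
    (h : Tendsto t atTop (𝓝 L)) : ILim I t L := by
  intro ε hε
  apply hI.finite_mem
  obtain ⟨N, hN⟩ := (Metric.tendsto_atTop.mp h) ε hε
  apply Set.Finite.subset (Set.finite_Iio N)
  intro n hn
  simp only [Set.mem_setOf_eq] at hn
  by_contra h'
  simp only [Set.mem_Iio, not_lt] at h'
  have := hN n h'
  rw [Real.dist_eq] at this
  linarith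

lemma ilim_unique (hI : AdmissibleIdeal I) {t : ℕ → ℝ} {L₁ L₂ : ℝ}
    (h₁ : ILim I t L₁) (h₂ : ILim I t L₂) : L₁ = L₂ := by
  by_contra hne
  have hεpos : 0 < |L₁ - L₂| / 2 := by
    have : L₁ - L₂ ≠ 0 := sub_ne_zero.mpr hne
    have := abs_pos.mpr this
    linarith
  have hu : Set.univ ⊆ {n | |L₁ - L₂| / 2 ≤ |t n - L₁|} ∪ {n | |L₁ - L₂| / 2 ≤ |t n - L₂|} := by
    intro n _
    by_contra h
    simp only [Set.mem_union, Set.mem_setOf_eq, not_or, not_le] at h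
    have h3 : |L₁ - L₂| ≤ |L₁ - t n| + |t n - L₂| := abs_sub_le _ _ _
    rw [abs_sub_comm L₁ (t n)] at h3
    linarith [h.1, h.2]
  exact hI.univ_not_mem (hI.subset_mem (hI.union_mem (h₁ _ hεpos) (h₂ _ hεpos)) hu)

lemma ilim_add (hI : AdmissibleIdeal I) {t s : ℕ → ℝ} {L M : ℝ}
    (h₁ : ILim I t L) (h₂ : ILim I s M) : ILim I (fun n => t n + s n) (L + M) := by
  intro ε hε
  apply hI.subset_mem (hI.union_mem (h₁ (ε/2) (by linarith)) (h₂ (ε/2) (by linarith)))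
  intro n hn
  simp only [Set.mem_setOf_eq] at hn
  by_contra h
  simp only [Set.mem_union, Set.mem_setOf_eq, not_or, not_le] at h
  have : |t n + s n - (L + M)| ≤ |t n - L| + |s n - M| := by
    have : |t n - L + (s n - M)| ≤ |t n - L| + |s n - M| := abs_add_le (t n - L) (s n - M)
    convert this using 2
    ring
  linarith [h.1, h.2]

lemma ilim_squeeze (hI : AdmissibleIdeal I) {t s : ℕ → ℝ}
    (h0 : ∀ n, 0 ≤ t n) (hts : ∀ n, t n ≤ s n) (hs : ILim I s 0) : ILim I t 0 := by
  intro ε hε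
  apply hI.subset_mem (hs ε hε)
  intro n hn
  simp only [Set.mem_setOf_eq, sub_zero] at hn ⊢
  rw [abs_of_nonneg (h0 n)] at hn
  exact hn.trans ((hts n).trans (le_abs_self _))

lemma dens_mono (hA : RegularMatrix A) (hI : AdmissibleIdeal I) {M N : Set ℕ}
    (hMN : M ⊆ N) (hN : AIDensity I A N 0) : AIDensity I A M 0 := by
  apply ilim_squeeze hI (fun n => tsum_nonneg fun k => Set.indicator_nonneg (fun k _ => hA.nonneg n k) k) _ hN
  intro n
  exact Summable.tsum_le_tsum
    (fun k => Set.indicator_le_indicator_of_subset hMN (fun k => hA.nonneg n k) k)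
    ((hA.summable n).indicator M) ((hA.summable n).indicator N)

lemma dens_finite (hA : RegularMatrix A) (hI : AdmissibleIdeal I) {F : Set ℕ}
    (hF : F.Finite) : AIDensity I A F 0 := by
  apply ilim_of_tendsto hI
  have heq : ∀ n, (∑' k, F.indicator (A n) k) = ∑ k ∈ hF.toFinset, A n k := by
    intro n
    rw [tsum_eq_sum (s := hF.toFinset) (by intro k hk; exact Set.indicator_of_notMem (by simpa using hk) _)]
    exact Finset.sum_congr rfl fun k hk => Set.indicator_of_mem (by simpa using hk) _
  simp only [heq]
  have := tendsto_finset_sum hF.toFinset (fun k _ => hA.col_lim k)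
  simpa using this

lemma dens_union (hA : RegularMatrix A) (hI : AdmissibleIdeal I) {M N : Set ℕ}
    (hM : AIDensity I A M 0) (hN : AIDensity I A N 0) : AIDensity I A (M ∪ N) 0 := by
  have hadd := ilim_add hI hM hN
  rw [add_zero] at hadd
  apply ilim_squeeze hI
    (fun n => tsum_nonneg fun k => Set.indicator_nonneg (fun k _ => hA.nonneg n k) k) _ hadd
  intro n
  have hptw : ∀ k, (M ∪ N).indicator (A n) k ≤ M.indicator (A n) k + N.indicator (A n) k := by
    intro k
    by_cases hM' : k ∈ M
    · by_cases hN' : k ∈ N <;>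
        simp [Set.indicator_of_mem, hM', hN', Set.mem_union, hA.nonneg n k]
    · by_cases hN' : k ∈ N <;>
        simp [Set.indicator_of_mem, Set.indicator_of_notMem, hM', hN', Set.mem_union, hA.nonneg n k]
  calc (∑' k, (M ∪ N).indicator (A n) k)
      ≤ ∑' k, (M.indicator (A n) k + N.indicator (A n) k) :=
        Summable.tsum_le_tsum hptw ((hA.summable n).indicator _)
          (((hA.summable n).indicator M).add ((hA.summable n).indicator N))
    _ = (∑' k, M.indicator (A n) k) + ∑' k, N.indicator (A n) k :=
        Summable.tsum_add ((hA.summable n).indicator M) ((hA.summable n).indicator N)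

lemma dens_univ (hA : RegularMatrix A) (hI : AdmissibleIdeal I) :
    AIDensity I A Set.univ 1 := by
  apply ilim_of_tendsto hI
  simpa [Set.indicator_univ] using hA.row_sum

lemma not_dens_compl (hA : RegularMatrix A) (hI : AdmissibleIdeal I) {M : Set ℕ}
    (hM : AIDensity I A M 0) : ¬ AIDensity I A Mᶜ 0 := by
  intro hMc
  have := dens_union hA hI hM hMc
  rw [Set.union_compl_self] at this
  exact zero_ne_one (ilim_unique hI this (dens_univ hA hI))
end Helpers

theorem stmt_13 {X : Type*} [MetricSpace X] (A : ℕ → ℕ → ℝ) (I : Set (Set ℕ))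
    (hA : RegularMatrix A) (hI : AdmissibleIdeal I) (hAP : APAIO I A)
    (x : ℕ → X) (μ : X) (hx : AIStatConv I A x μ) :
    AIStatLimitPts I A x = {μ} ∧ AIStatClusterPts I A x = {μ} := by
  constructor
  · apply Set.eq_singleton_iff_unique_mem.mpr
    constructor
    · -- μ is an A^I-statistical limit point
      set K : ℕ → Set ℕ := fun j => {k | 1/((j:ℝ)+1) ≤ dist (x k) μ} with hK
      have hKdens : ∀ j, AIDensity I A (K j) 0 := fun j => hx _ (by positivity)
      set G : ℕ → Set ℕ := fun j => K j \ ⋃ i < j, K i with hG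
      have hGdisj : Pairwise (Function.onFun Disjoint G) := by
        have key : ∀ i j, i < j → Disjoint (G i) (G j) := by
          intro i j h
          apply Set.disjoint_left.mpr
          intro k hki hkj
          exact hkj.2 (Set.mem_biUnion h hki.1)
        intro i j hij
        rcases lt_or_gt_of_ne hij with h | h
        · exact key i j h
        · exact (key j i h).symm
      have hGdens : ∀ j, AIDensity I A (G j) 0 :=
        fun j => dens_mono hA hI Set.diff_subset (hKdens j)
      obtain ⟨H, hHfin, hHdens⟩ := hAP G hGdisj hGdens
      set S := ⋃ j, H j with hS
      have hKcov : ∀ j, K j ⊆ ⋃ i ≤ j, G i := by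
        intro j k hk
        have hex : ∃ i, k ∈ K i := ⟨j, hk⟩
        classical
        refine Set.mem_biUnion (Nat.find_le (h := hex) hk) ⟨Nat.find_spec hex, ?_⟩
        intro hmem
        obtain ⟨i', hi', hk'⟩ := Set.mem_iUnion₂.mp hmem
        exact Nat.find_min hex hi' hk'

      have hfinKS : ∀ j, (Sᶜ ∩ K j).Finite := by
        intro j
        apply Set.Finite.subset
          (Set.Finite.biUnion (Set.finite_Iic j) (fun i _ => hHfin i))
        intro k ⟨hkS, hkK⟩
        obtain ⟨i, hij, hkG⟩ := Set.mem_iUnion₂.mp (hKcov j hkK)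
        refine Set.mem_biUnion hij ?_
        have hkH : k ∉ H i := fun h => hkS (Set.mem_iUnion.mpr ⟨i, h⟩)
        rw [Set.symmDiff_def]
        exact Or.inl ⟨hkG, hkH⟩
      have hScinf : Sᶜ.Infinite := by
        intro hfin
        exact not_dens_compl hA hI hHdens (dens_finite hA hI hfin)
      refine ⟨Nat.nth (· ∈ Sᶜ), Nat.nth_strictMono hScinf, ?_, ?_⟩
      · have hr : Set.range (Nat.nth (· ∈ Sᶜ)) = Sᶜ := Nat.range_nth_of_infinite hScinf
        rw [hr]
        exact not_dens_compl hA hI hHdens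
      · rw [Metric.tendsto_atTop]
        intro ε hε
        obtain ⟨j, hj⟩ := exists_nat_one_div_lt hε
        obtain ⟨N, hN⟩ := (hfinKS j).bddAbove
        refine ⟨N + 1, fun m hm => ?_⟩
        have hmem : Nat.nth (· ∈ Sᶜ) m ∈ Sᶜ := Nat.nth_mem_of_infinite hScinf m
        have hge : N + 1 ≤ Nat.nth (· ∈ Sᶜ) m :=
          le_trans hm ((Nat.nth_strictMono hScinf).le_apply)
        have hnotK : Nat.nth (· ∈ Sᶜ) m ∉ K j := by
          intro hK'
          have := hN ⟨hmem, hK'⟩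
          omega
        simp only [hK, Set.mem_setOf_eq, not_le] at hnotK
        calc dist (x (Nat.nth (· ∈ Sᶜ) m)) μ < 1/((j:ℝ)+1) := hnotK
          _ < ε := hj
    · -- uniqueness
      rintro ζ ⟨f, hf, hnd, hconv⟩
      by_contra hne
      have hε : 0 < dist ζ μ / 2 := by
        have := dist_pos.mpr hne; linarith
      apply hnd
      obtain ⟨J, hJ⟩ := Metric.tendsto_atTop.mp hconv _ hε
      have hsub : Set.range f ⊆ (f '' Set.Iio J) ∪ {k | dist ζ μ / 2 ≤ dist (x k) μ} := by
        rintro _ ⟨j, rfl⟩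
        by_cases hjJ : j < J
        · exact Or.inl ⟨j, hjJ, rfl⟩
        · right
          have h1 := hJ j (le_of_not_gt hjJ)
          simp only [Set.mem_setOf_eq]
          have h2 := dist_triangle ζ (x (f j)) μ
          rw [dist_comm ζ (x (f j))] at h2
          linarith
      exact dens_mono hA hI hsub
        (dens_union hA hI (dens_finite hA hI ((Set.finite_Iio J).image f)) (hx _ hε))
  · apply Set.eq_singleton_iff_unique_mem.mpr
    constructor
    · intro ε hε hd
      have hcompl : {k : ℕ | dist (x k) μ < ε}ᶜ = {k : ℕ | ε ≤ dist (x k) μ} := by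
        ext k; simp [not_lt]
      have h := not_dens_compl hA hI hd
      rw [hcompl] at h
      exact h (hx ε hε)
    · intro ν hν
      by_contra hne
      have hε : 0 < dist ν μ / 2 := by
        have := dist_pos.mpr hne; linarith
      apply hν _ hε
      apply dens_mono hA hI _ (hx _ hε)
      intro k hk
      simp only [Set.mem_setOf_eq] at hk ⊢
      have h2 := dist_triangle ν (x k) μ
      rw [dist_comm ν (x k)] at h2
      linarith
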